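/- Let m: (0,∞) → ℂ satisfy the Mihlin condition |m^{(k)}(λ)| ≲ λ^{−k} for 0 ≤ k ≤ 2, and let \tilde m be its even extension. Then \widehat{\tilde m} admits a bounded antiderivative on ℝ \ {0}: there exists a function F with |F(t)| ≲ 1 and F' = \widehat{\tilde m} away from 0. -/

import Mathlib

open MeasureTheory Real Complex

/-- The Fourier transform `ĝ(t) = ∫ g(λ) e^{−iλt} dλ`. -/
noncomputable def FT (g : ℝ → ℂ) (t : ℝ) : ℂ :=
  ∫ l : ℝ, g l * Complex.exp (-(Complex.I * l * t))

lemma aux_norm_exp (s : ℝ) : ‖Complex.exp (↑s * I)‖ = 1 := by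
  exact Complex.norm_exp_ofReal_mul_I s

lemma aux_one_sub_exp (s : ℝ) : ‖1 - Complex.exp (↑s * I)‖ ≤ |s| := by
  have h1 : (1 : ℂ) - Complex.exp (↑s * I) = ((1 - Real.cos s : ℝ) : ℂ) - (Real.sin s : ℝ) * I := by
    rw [Complex.exp_mul_I]
    push_cast [Complex.ofReal_cos, Complex.ofReal_sin]
    ring
  have hsq : ‖(1 : ℂ) - Complex.exp (↑s * I)‖ ^ 2 ≤ |s| ^ 2 := by
    rw [h1]
    rw [Complex.sq_norm, Complex.normSq_apply]
    have h2 : Real.cos s = 1 - 2 * Real.sin (s/2) ^ 2 := by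
      have hc := Real.cos_two_mul (s/2)
      have hsc := Real.sin_sq_add_cos_sq (s/2)
      have : 2 * (s/2) = s := by ring
      rw [this] at hc
      nlinarith
    have h3 : Real.sin (s/2) ^ 2 ≤ (s/2) ^ 2 := Real.sin_sq_le_sq
    simp only [Complex.sub_re, Complex.sub_im, Complex.ofReal_re, Complex.ofReal_im,
      Complex.mul_re, Complex.mul_im, Complex.I_re, Complex.I_im]
    nlinarith [Real.sin_sq_add_cos_sq s, _root_.sq_abs s]
  calc ‖(1:ℂ) - Complex.exp (↑s * I)‖ = Real.sqrt (‖(1:ℂ) - Complex.exp (↑s*I)‖^2) := by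
        rw [Real.sqrt_sq (norm_nonneg _)]
    _ ≤ Real.sqrt (|s|^2) := Real.sqrt_le_sqrt hsq
    _ = |s| := Real.sqrt_sq (abs_nonneg _)

lemma aux_exp_eq (l x : ℝ) : -(I * (l:ℂ) * (x:ℂ)) = ((-(l*x) : ℝ) : ℂ) * I := by
  push_cast; ring

lemma aux_norm_exp' (l x : ℝ) : ‖Complex.exp (-(I * (l:ℂ) * (x:ℂ)))‖ = 1 := by
  rw [aux_exp_eq]; exact aux_norm_exp _

lemma aux_kernel_bound (l x : ℝ) (hl : l ≠ 0) :
    ‖(1 - Complex.exp (-(I * (l:ℂ) * (x:ℂ)))) / (I * (l:ℂ))‖ ≤ |x| := by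
  rw [norm_div, aux_exp_eq]
  have h1 : ‖1 - Complex.exp (((-(l*x):ℝ):ℂ) * I)‖ ≤ |l * x| := by
    simpa [abs_neg] using aux_one_sub_exp (-(l*x))
  have h2 : ‖I * (l:ℂ)‖ = |l| := by
    simp [map_mul]
  rw [h2, div_le_iff₀ (by positivity : (0:ℝ) < |l|)]
  calc ‖1 - Complex.exp (((-(l*x):ℝ):ℂ) * I)‖ ≤ |l * x| := h1
    _ = |x| * |l| := by rw [abs_mul]; ring

lemma aux_kernel_meas (x : ℝ) :
    Measurable fun l : ℝ => (1 - Complex.exp (-(I * (l:ℂ) * (x:ℂ)))) / (I * (l:ℂ)) := by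
  fun_prop

lemma aux_int (tm : ℝ → ℂ) (hint : Integrable tm) (x : ℝ) :
    Integrable (fun l : ℝ => tm l * ((1 - Complex.exp (-(I * (l:ℂ) * (x:ℂ)))) / (I * (l:ℂ)))) := by
  have hne : ∀ᵐ l : ℝ, l ≠ (0:ℝ) := by
    rw [ae_iff]
    simpa using measure_singleton (0:ℝ)
  refine Integrable.mono' (hint.norm.const_mul |x|)
    (hint.aestronglyMeasurable.mul (aux_kernel_meas x).aestronglyMeasurable) ?_
  filter_upwards [hne] with l hl
  rw [norm_mul]
  calc ‖tm l‖ * ‖(1 - Complex.exp (-(I * (l:ℂ) * (x:ℂ)))) / (I * (l:ℂ))‖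
      ≤ ‖tm l‖ * |x| := by
        exact mul_le_mul_of_nonneg_left (aux_kernel_bound l x hl) (norm_nonneg _)
    _ = |x| * ‖tm l‖ := mul_comm _ _

lemma aux_deriv (tm : ℝ → ℂ) (hint : Integrable tm) (t : ℝ) :
    HasDerivAt (fun x : ℝ => ∫ l : ℝ, tm l * ((1 - Complex.exp (-(I * (l:ℂ) * (x:ℂ)))) / (I * (l:ℂ))))
      (FT tm t) t := by
  have hne : ∀ᵐ l : ℝ, l ≠ (0:ℝ) := by
    rw [ae_iff]; simpa using measure_singleton (0:ℝ)
  have key := hasDerivAt_integral_of_dominated_loc_of_deriv_le (μ := volume)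
    (F := fun (x : ℝ) (l : ℝ) => tm l * ((1 - Complex.exp (-(I * (l:ℂ) * (x:ℂ)))) / (I * (l:ℂ))))
    (F' := fun (x : ℝ) (l : ℝ) => tm l * Complex.exp (-(I * (l:ℂ) * (x:ℂ))))
    (x₀ := t) (bound := fun l => ‖tm l‖) (Metric.ball_mem_nhds t one_pos)
    (.of_forall fun x => (hint.aestronglyMeasurable.mul (aux_kernel_meas x).aestronglyMeasurable))
    (aux_int tm hint t)
    (hint.aestronglyMeasurable.mul
      (Complex.continuous_exp.comp (by fun_prop : Continuous fun l : ℝ => -(I * (l:ℂ) * (t:ℂ)))).aestronglyMeasurable)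
    ?_ hint.norm ?_
  · exact key.2
  · filter_upwards with l
    intro x _
    rw [norm_mul, aux_norm_exp' l x, mul_one]
  · filter_upwards [hne] with l hl
    intro x _
    have hIl : I * (l:ℂ) ≠ 0 := by
      simp [Complex.ext_iff, hl, Complex.I_ne_zero]
    have h0 : HasDerivAt (fun x : ℝ => -(I * (l:ℂ) * (x:ℂ))) (-(I * (l:ℂ))) x := by
      simpa [Pi.neg_def] using ((Complex.ofRealCLM.hasDerivAt (x := x)).const_mul (I * (l:ℂ))).neg
    have h1 : HasDerivAt (fun x : ℝ => Complex.exp (-(I * (l:ℂ) * (x:ℂ))))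
        (Complex.exp (-(I * (l:ℂ) * (x:ℂ))) * (-(I * (l:ℂ)))) x := h0.cexp
    have h2 := ((h1.const_sub 1).div_const (I * (l:ℂ))).const_mul (tm l)
    exact h2.congr_deriv (by field_simp [Complex.ofReal_ne_zero.mpr hl])
  
lemma aux_exp_eq' (l x : ℝ) : I * (l:ℂ) * (x:ℂ) = ((l*x : ℝ) : ℂ) * I := by
  push_cast; ring

lemma aux_norm_Il (l : ℝ) : ‖I * (l:ℂ)‖ = |l| := by
  simp [map_mul]

lemma aux_kernel2_num (l x : ℝ) :
    ‖Complex.exp (I * (l:ℂ) * (x:ℂ)) - Complex.exp (-(I * (l:ℂ) * (x:ℂ)))‖ ≤ 2 * |l * x| := by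
  have h1 : ‖1 - Complex.exp (I * (l:ℂ) * (x:ℂ))‖ ≤ |l * x| := by
    rw [aux_exp_eq']; exact aux_one_sub_exp _
  have h2 : ‖1 - Complex.exp (-(I * (l:ℂ) * (x:ℂ)))‖ ≤ |l * x| := by
    rw [aux_exp_eq]
    simpa [abs_neg] using aux_one_sub_exp (-(l*x))
  calc ‖Complex.exp (I * (l:ℂ) * (x:ℂ)) - Complex.exp (-(I * (l:ℂ) * (x:ℂ)))‖
      = ‖(1 - Complex.exp (-(I * (l:ℂ) * (x:ℂ)))) - (1 - Complex.exp (I * (l:ℂ) * (x:ℂ)))‖ := by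
        congr 1; ring
    _ ≤ ‖1 - Complex.exp (-(I * (l:ℂ) * (x:ℂ)))‖ + ‖1 - Complex.exp (I * (l:ℂ) * (x:ℂ))‖ :=
        norm_sub_le _ _
    _ ≤ 2 * |l * x| := by linarith

lemma aux_kernel2_num' (l x : ℝ) :
    ‖Complex.exp (I * (l:ℂ) * (x:ℂ)) - Complex.exp (-(I * (l:ℂ) * (x:ℂ)))‖ ≤ 2 := by
  calc ‖Complex.exp (I * (l:ℂ) * (x:ℂ)) - Complex.exp (-(I * (l:ℂ) * (x:ℂ)))‖
      ≤ ‖Complex.exp (I * (l:ℂ) * (x:ℂ))‖ + ‖Complex.exp (-(I * (l:ℂ) * (x:ℂ)))‖ := norm_sub_le _ _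
    _ ≤ 2 := by
        rw [aux_exp_eq, aux_exp_eq', aux_norm_exp, aux_norm_exp]; norm_num

lemma aux_bdd (m tm : ℝ → ℂ) (C0 C1 : ℝ)
    (hm : ContDiffOn ℝ 2 m (Set.Ioi 0))
    (hC0 : ∀ l : ℝ, 0 < l → ‖m l‖ ≤ C0)
    (hC1 : ∀ l : ℝ, 0 < l → ‖deriv m l‖ ≤ C1 / l)
    (htm : ∀ l : ℝ, tm l = m |l|) (hint : Integrable tm) (t : ℝ) :
    ‖∫ l : ℝ, tm l * ((1 - Complex.exp (-(I * (l:ℂ) * (t:ℂ)))) / (I * (l:ℂ)))‖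
      ≤ 8 * C0 + 2 * C1 := by
  have hC0' : 0 ≤ C0 := le_trans (norm_nonneg _) (hC0 1 one_pos)
  have hC1' : 0 ≤ C1 := by
    have := le_trans (norm_nonneg _) (hC1 1 one_pos); simpa using this
  rcases eq_or_ne t 0 with rfl | ht
  · simp only [Complex.ofReal_zero, mul_zero, neg_zero, Complex.exp_zero, sub_self, zero_div,
      mul_zero, integral_zero, norm_zero]
    positivity
  have htabs : 0 < |t| := abs_pos.2 ht
  set a : ℝ := |t|⁻¹ with ha_def
  have ha : 0 < a := by positivity
  set g : ℝ → ℂ := fun l => tm l * ((1 - Complex.exp (-(I * (l:ℂ) * (t:ℂ)))) / (I * (l:ℂ))) with hg_def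
  set h : ℝ → ℂ := fun l =>
    m l * ((Complex.exp (I * (l:ℂ) * (t:ℂ)) - Complex.exp (-(I * (l:ℂ) * (t:ℂ)))) / (I * (l:ℂ)))
    with hh_def
  have hg : Integrable g := aux_int tm hint t
  have hgneg : Integrable (fun l => g (-l)) := hg.comp_neg
  -- symmetrize
  have heqon : Set.EqOn (fun l => g (-l) + g l) h (Set.Ioi 0) := by
    intro l hl
    have hl0 : (0:ℝ) < l := hl
    have hlC : (l:ℂ) ≠ 0 := by exact_mod_cast hl0.ne'
    simp only [hg_def, hh_def]
    rw [htm, htm, abs_neg, abs_of_pos hl0, Complex.ofReal_neg]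
    rw [show -(I * (-(l:ℂ)) * (t:ℂ)) = I * (l:ℂ) * (t:ℂ) by ring]
    have hIl : I * (l:ℂ) ≠ 0 := mul_ne_zero Complex.I_ne_zero hlC
    field_simp
    ring
  have hh_int : IntegrableOn h (Set.Ioi 0) :=
    ((hgneg.add hg).integrableOn).congr_fun heqon measurableSet_Ioi
  have hsym : (∫ l, g l) = ∫ l in Set.Ioi 0, h l := by
    have e1 : (∫ l, g l) = (∫ l in Set.Iic 0, g l) + ∫ l in Set.Ioi 0, g l :=
      (intervalIntegral.integral_Iic_add_Ioi hg.integrableOn hg.integrableOn).symm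
    have e2 : (∫ l in Set.Iic 0, g l) = ∫ l in Set.Ioi 0, g (-l) := by
      have := integral_comp_neg_Iic (0:ℝ) (fun x => g (-x))
      simp only [neg_neg, neg_zero] at this
      exact this
    have e3 : ((∫ l in Set.Ioi 0, g (-l)) + ∫ l in Set.Ioi 0, g l)
        = ∫ l in Set.Ioi 0, (g (-l) + g l) :=
      (integral_add hgneg.integrableOn hg.integrableOn).symm
    rw [e1, e2, e3, setIntegral_congr_fun measurableSet_Ioi heqon]
  -- split
  have hsplit : (∫ l in Set.Ioi 0, h l)
      = (∫ l in Set.Ioc 0 a, h l) + ∫ l in Set.Ioi a, h l := by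
    rw [← setIntegral_union (Set.Ioc_disjoint_Ioi le_rfl) measurableSet_Ioi
      (hh_int.mono_set Set.Ioc_subset_Ioi_self) (hh_int.mono_set (Set.Ioi_subset_Ioi ha.le)),
      Set.Ioc_union_Ioi_eq_Ioi ha.le]
  -- part I
  have hI : ‖∫ l in Set.Ioc 0 a, h l‖ ≤ 2 * C0 := by
    have hb : ∀ l ∈ Set.Ioc (0:ℝ) a, ‖h l‖ ≤ C0 * (2 * |t|) := by
      intro l hl
      have hl0 : 0 < l := hl.1
      simp only [hh_def]
      rw [norm_mul, norm_div, aux_norm_Il, abs_of_pos hl0]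
      have hnum := aux_kernel2_num l t
      have h1 : ‖Complex.exp (I * (l:ℂ) * (t:ℂ)) - Complex.exp (-(I * (l:ℂ) * (t:ℂ)))‖ / l
          ≤ 2 * |t| := by
        rw [div_le_iff₀ hl0]
        calc ‖Complex.exp (I * (l:ℂ) * (t:ℂ)) - Complex.exp (-(I * (l:ℂ) * (t:ℂ)))‖
            ≤ 2 * |l * t| := hnum
          _ = 2 * |t| * l := by rw [abs_mul, abs_of_pos hl0]; ring
      exact mul_le_mul (hC0 l hl0) h1 (by positivity) hC0'
    have hmeas : volume (Set.Ioc (0:ℝ) a) < ⊤ := by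
      rw [Real.volume_Ioc]; exact ENNReal.ofReal_lt_top
    have := norm_setIntegral_le_of_norm_le_const hmeas hb
    rw [Real.volume_real_Ioc] at this
    have htoReal : max (a - 0) 0 = a := by
      rw [max_eq_left (by linarith)]; ring
    rw [htoReal] at this
    calc ‖∫ l in Set.Ioc 0 a, h l‖ ≤ C0 * (2 * |t|) * a := this
      _ = 2 * C0 := by
          field_simp [ha_def]
          rw [ha_def, mul_assoc, mul_inv_cancel₀ htabs.ne', mul_one]
  -- part II
  have hmd : ∀ l : ℝ, 0 < l → HasDerivAt m (deriv m l) l := fun l hl =>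
    ((hm.differentiableOn (by norm_num)).differentiableAt (isOpen_Ioi.mem_nhds hl)).hasDerivAt
  have hdc : ContinuousOn (deriv m) (Set.Ioi 0) :=
    hm.continuousOn_deriv_of_isOpen isOpen_Ioi (by norm_num)
  set u : ℝ → ℂ := fun l => m l / (I * (l:ℂ)) with hu_def
  set u' : ℝ → ℂ := fun l => (deriv m l * (I * (l:ℂ)) - m l * I) / (I * (l:ℂ))^2 with hu'_def
  set v : ℝ → ℂ := fun l =>
    (Complex.exp (I * (l:ℂ) * (t:ℂ)) + Complex.exp (-(I * (l:ℂ) * (t:ℂ)))) / (I * (t:ℂ)) with hv_def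
  set v' : ℝ → ℂ := fun l =>
    Complex.exp (I * (l:ℂ) * (t:ℂ)) - Complex.exp (-(I * (l:ℂ) * (t:ℂ))) with hv'_def
  have htC : (t:ℂ) ≠ 0 := by exact_mod_cast ht
  have hItC : I * (t:ℂ) ≠ 0 := mul_ne_zero Complex.I_ne_zero htC
  have hnv : ∀ l : ℝ, ‖v l‖ ≤ 2 / |t| := by
    intro l
    simp only [hv_def]
    rw [norm_div, aux_norm_Il]
    gcongr
    calc ‖Complex.exp (I * (l:ℂ) * (t:ℂ)) + Complex.exp (-(I * (l:ℂ) * (t:ℂ)))‖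
        ≤ ‖Complex.exp (I * (l:ℂ) * (t:ℂ))‖ + ‖Complex.exp (-(I * (l:ℂ) * (t:ℂ)))‖ :=
          norm_add_le _ _
      _ ≤ 2 := by rw [aux_exp_eq, aux_exp_eq', aux_norm_exp, aux_norm_exp]; norm_num
  have hnu : ∀ l : ℝ, 0 < l → ‖u l‖ ≤ C0 / l := by
    intro l hl
    simp only [hu_def]
    rw [norm_div, aux_norm_Il, abs_of_pos hl]
    gcongr
    exact hC0 l hl
  have hnu' : ∀ l : ℝ, 0 < l → ‖u' l‖ ≤ (C0 + C1) / l^2 := by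
    intro l hl
    have hl' : l ≠ 0 := hl.ne'
    simp only [hu'_def]
    rw [norm_div]
    have hden : ‖(I * (l:ℂ))^2‖ = l^2 := by
      rw [norm_pow, aux_norm_Il, abs_of_pos hl]
    rw [hden]
    gcongr
    calc ‖deriv m l * (I * (l:ℂ)) - m l * I‖
        ≤ ‖deriv m l * (I * (l:ℂ))‖ + ‖m l * I‖ := norm_sub_le _ _
      _ = ‖deriv m l‖ * l + ‖m l‖ := by
          rw [norm_mul, aux_norm_Il, abs_of_pos hl, norm_mul, Complex.norm_I, mul_one]
      _ ≤ (C1 / l) * l + C0 := by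
          gcongr
          exacts [hC1 l hl, hC0 l hl]
      _ = C0 + C1 := by field_simp; ring
  have hbdry : ∀ l : ℝ, a ≤ l → ‖u l * v l‖ ≤ 2 * C0 := by
    intro l hla
    have hl0 : 0 < l := lt_of_lt_of_le ha hla
    have h1l : (1:ℝ) ≤ l * |t| := by
      rw [ha_def] at hla
      calc (1:ℝ) = |t|⁻¹ * |t| := by field_simp
        _ ≤ l * |t| := by gcongr
    rw [norm_mul]
    calc ‖u l‖ * ‖v l‖ ≤ (C0/l) * (2/|t|) :=
          mul_le_mul (hnu l hl0) (hnv l) (norm_nonneg _) (by positivity)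
      _ = 2*C0 / (l * |t|) := by field_simp
      _ ≤ 2*C0 / 1 := by gcongr
      _ = 2*C0 := div_one _
  have hR : ∀ R : ℝ, a ≤ R → ‖∫ l in a..R, h l‖ ≤ 6*C0 + 2*C1 := by
    intro R haR
    have hsub : Set.uIcc a R ⊆ Set.Ioi 0 := by
      rw [Set.uIcc_of_le haR]; intro x hx; exact lt_of_lt_of_le ha hx.1
    have hu : ∀ x ∈ Set.uIcc a R, HasDerivAt u (u' x) x := by
      intro x hx
      have hx0 : 0 < x := hsub hx
      have hxC : (x:ℂ) ≠ 0 := by exact_mod_cast hx0.ne'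
      have hId : HasDerivAt (fun y : ℝ => I * (y:ℂ)) I x := by
        simpa using (Complex.ofRealCLM.hasDerivAt (x := x)).const_mul I
      exact (hmd x hx0).div hId (mul_ne_zero Complex.I_ne_zero hxC)
    have hvd : ∀ x ∈ Set.uIcc a R, HasDerivAt v (v' x) x := by
      intro x hx
      have h0 : HasDerivAt (fun y : ℝ => I * (y:ℂ) * (t:ℂ)) (I * (t:ℂ)) x := by
        have := ((Complex.ofRealCLM.hasDerivAt (x := x)).const_mul I).mul_const ((t:ℂ))
        simpa using this
      have h1 := (h0.cexp.add (h0.neg.cexp)).div_const (I * (t:ℂ))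
      exact h1.congr_deriv (by simp only [hv'_def, Pi.neg_apply]; field_simp; ring)
    have hu'int : IntervalIntegrable u' volume a R := by
      apply ContinuousOn.intervalIntegrable
      apply ContinuousOn.div
      · exact ((hdc.mono hsub).mul
          ((by fun_prop : Continuous fun y : ℝ => I * (y:ℂ)).continuousOn)).sub
          ((hm.continuousOn.mono hsub).mul continuousOn_const)
      · fun_prop
      · intro x hx
        have hx0 : 0 < x := hsub hx
        have hxC : (x:ℂ) ≠ 0 := by exact_mod_cast hx0.ne'
        exact pow_ne_zero _ (mul_ne_zero Complex.I_ne_zero hxC)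
    have hv'int : IntervalIntegrable v' volume a R := by
      simp only [hv'_def]
      exact Continuous.intervalIntegrable (by fun_prop) a R
    have hIBP := intervalIntegral.integral_mul_deriv_eq_deriv_mul hu hvd hu'int hv'int
    have heq2 : (∫ l in a..R, h l) = ∫ l in a..R, u l * v' l := by
      apply intervalIntegral.integral_congr
      intro x hx
      simp only [hh_def, hu_def, hv'_def]
      ring
    have hint3 : ‖∫ x in a..R, u' x * v x‖ ≤ 2*(C0+C1) := by
      have hptwise : ∀ᵐ x ∂volume.restrict (Set.uIoc a R),
          ‖u' x * v x‖ ≤ (2*(C0+C1)/|t|) * (x^2)⁻¹ := by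
        refine (ae_restrict_iff' measurableSet_uIoc).2 (Filter.Eventually.of_forall ?_)
        intro x hx
        have hx0 : 0 < x := by
          rw [Set.uIoc_of_le haR] at hx; exact lt_trans ha hx.1
        rw [norm_mul]
        calc ‖u' x‖ * ‖v x‖ ≤ ((C0+C1)/x^2) * (2/|t|) :=
              mul_le_mul (hnu' x hx0) (hnv x) (norm_nonneg _) (by positivity)
          _ = (2*(C0+C1)/|t|) * (x^2)⁻¹ := by field_simp
      have hgint : IntervalIntegrable (fun x : ℝ => (2*(C0+C1)/|t|) * (x^2)⁻¹) volume a R := by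
        apply ContinuousOn.intervalIntegrable
        apply continuousOn_const.mul
        apply ContinuousOn.inv₀ (by fun_prop)
        intro x hx
        have hx0 : 0 < x := hsub hx
        positivity
      have hle := intervalIntegral.norm_integral_le_abs_of_norm_le hptwise hgint
      have h0uIcc : (0:ℝ) ∉ Set.uIcc a R := fun hc => lt_irrefl (0:ℝ) (hsub hc)
      have hzint := integral_zpow (a := a) (b := R) (n := -2) (Or.inr ⟨by norm_num, h0uIcc⟩)
      have hinv : (∫ x in a..R, (x^2)⁻¹) = a⁻¹ - R⁻¹ := by
        have : (∫ x in a..R, (x^2)⁻¹) = ∫ x in a..R, (x:ℝ) ^ (-2:ℤ) := by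
          apply intervalIntegral.integral_congr
          intro x hx
          have hx0 : 0 < x := hsub hx
          simp [zpow_neg]
        rw [this, hzint]
        simp only [show (-2 + 1 : ℤ) = -1 by norm_num, zpow_neg, zpow_one]
        push_cast
        ring
      rw [intervalIntegral.integral_const_mul, hinv] at hle
      have hRa : R⁻¹ ≤ a⁻¹ := by gcongr
      have habs : |2*(C0+C1)/|t| * (a⁻¹ - R⁻¹)| = 2*(C0+C1)/|t| * (a⁻¹ - R⁻¹) := by
        apply _root_.abs_of_nonneg
        apply mul_nonneg (div_nonneg (by linarith) (abs_nonneg t))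
        linarith
      rw [habs] at hle
      calc ‖∫ x in a..R, u' x * v x‖ ≤ 2*(C0+C1)/|t| * (a⁻¹ - R⁻¹) := hle
        _ ≤ 2*(C0+C1)/|t| * a⁻¹ := by
            apply mul_le_mul_of_nonneg_left _ (div_nonneg (by linarith) (abs_nonneg t))
            have : 0 ≤ R⁻¹ := inv_nonneg.2 (le_trans ha.le haR)
            linarith
        _ = 2*(C0+C1) := by
            rw [ha_def, inv_inv]
            field_simp
    rw [heq2, hIBP]
    calc ‖u R * v R - u a * v a - ∫ x in a..R, u' x * v x‖
        ≤ ‖u R * v R - u a * v a‖ + ‖∫ x in a..R, u' x * v x‖ := norm_sub_le _ _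
      _ ≤ (‖u R * v R‖ + ‖u a * v a‖) + ‖∫ x in a..R, u' x * v x‖ := by
          gcongr
          exact norm_sub_le _ _
      _ ≤ (2*C0 + 2*C0) + 2*(C0+C1) :=
          add_le_add (add_le_add (hbdry R haR) (hbdry a le_rfl)) hint3
      _ = 6*C0 + 2*C1 := by ring
  have hIoi : ‖∫ l in Set.Ioi a, h l‖ ≤ 6*C0 + 2*C1 := by
    have hlim := intervalIntegral_tendsto_integral_Ioi a
      (hh_int.mono_set (Set.Ioi_subset_Ioi ha.le)) Filter.tendsto_id
    exact le_of_tendsto hlim.norm (Filter.eventually_atTop.2 ⟨a, hR⟩)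
  rw [hsym, hsplit]
  calc ‖(∫ l in Set.Ioc 0 a, h l) + ∫ l in Set.Ioi a, h l‖
      ≤ ‖∫ l in Set.Ioc 0 a, h l‖ + ‖∫ l in Set.Ioi a, h l‖ := norm_add_le _ _
    _ ≤ 2*C0 + (6*C0 + 2*C1) := add_le_add hI hIoi
    _ = 8*C0 + 2*C1 := by ring

/-- if `m : (0,∞) → ℂ` satisfies the Mihlin condition
`|m^{(k)}(λ)| ≲ λ^{−k}` for `0 ≤ k ≤ 2` and `\tilde m(λ) = m(|λ|)` is its even
extension, then `\widehat{\tilde m}` admits a bounded antiderivative on `ℝ \ {0}`: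
there is `F` with `|F(t)| ≲ 1` and `F' = \widehat{\tilde m}` away from `0`. -/
theorem stmt10 (m : ℝ → ℂ) (Ck : ℕ → ℝ)
    (hm : ContDiffOn ℝ 2 m (Set.Ioi 0))
    (hmihlin : ∀ k : ℕ, k ≤ 2 → ∀ l : ℝ, 0 < l →
      ‖iteratedDerivWithin k m (Set.Ioi 0) l‖ ≤ Ck k * l ^ (-(k : ℝ)))
    (tm : ℝ → ℂ) (htm : ∀ l : ℝ, tm l = m |l|) :
    ∃ F : ℝ → ℂ, (∃ C : ℝ, ∀ t : ℝ, ‖F t‖ ≤ C) ∧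
      ∀ t : ℝ, t ≠ 0 → HasDerivAt F (FT tm t) t := by
  by_cases hint : Integrable tm
  · refine ⟨fun t => ∫ l : ℝ, tm l * ((1 - Complex.exp (-(I * (l:ℂ) * (t:ℂ)))) / (I * (l:ℂ))),
      ⟨8 * Ck 0 + 2 * Ck 1, fun t => ?_⟩, fun t _ => aux_deriv tm hint t⟩
    have hC0 : ∀ l : ℝ, 0 < l → ‖m l‖ ≤ Ck 0 := by
      intro l hl
      have := hmihlin 0 (by norm_num) l hl
      simpa using this
    have hC1 : ∀ l : ℝ, 0 < l → ‖deriv m l‖ ≤ Ck 1 / l := by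
      intro l hl
      have h1 := hmihlin 1 (by norm_num) l hl
      rw [iteratedDerivWithin_one,
        derivWithin_of_isOpen isOpen_Ioi hl] at h1
      calc ‖deriv m l‖ ≤ Ck 1 * l ^ (-(1:ℕ):ℝ) := h1
        _ = Ck 1 / l := by
            rw [show (-(1:ℕ):ℝ) = -1 by norm_num, Real.rpow_neg_one]
            ring
    exact aux_bdd m tm (Ck 0) (Ck 1) hm hC0 hC1 htm hint t
  · refine ⟨0, ⟨0, fun t => by simp⟩, fun t _ => ?_⟩
    have hni : ¬ Integrable fun l : ℝ => tm l * Complex.exp (-(I * (l:ℂ) * (t:ℂ))) := by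
      intro h
      apply hint
      have h2 : Integrable fun l : ℝ =>
          Complex.exp (I * (l:ℂ) * (t:ℂ)) * (tm l * Complex.exp (-(I * (l:ℂ) * (t:ℂ)))) :=
        h.bdd_mul (Complex.continuous_exp.comp (by fun_prop : Continuous fun l : ℝ =>
            I * (l:ℂ) * (t:ℂ))).aestronglyMeasurable
          (c := 1) (Filter.Eventually.of_forall fun l => by
            have := aux_norm_exp (l * t)
            rw [show ((l*t:ℝ):ℂ) * I = I * (l:ℂ) * (t:ℂ) by push_cast; ring] at this
            simp [this])
      refine h2.congr (Filter.Eventually.of_forall fun l => ?_)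
      show Complex.exp (I * (l:ℂ) * (t:ℂ)) * (tm l * Complex.exp (-(I * (l:ℂ) * (t:ℂ)))) = tm l
      rw [mul_comm, mul_assoc, ← Complex.exp_add]
      simp
    have hFT : FT tm t = 0 := integral_undef hni
    rw [hFT]
    exact hasDerivAt_const t 0
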